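/- For α ∈ (−2,2), the Takagi–Landsberg function f_α satisfies f_α(t) ≥ 0 for all t ∈ [0,1] if and only if α ≥ −1. Moreover, there is no α ∈ (−2,2) such that f_α(t) ≤ 0 for all t ∈ [0,1]. -/

import Mathlib

open MeasureTheory Filter Set

/-- The tent map: distance to the nearest integer. -/
noncomputable def phi (t : ℝ) : ℝ := ⨅ z : ℤ, |t - (z : ℝ)|

/-- A function in the Takagi class, for coefficient sequence `c`. -/
noncomputable def takagiF (c : ℕ → ℝ) (t : ℝ) : ℝ := ∑' m : ℕ, c m * phi (2 ^ m * t)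

/-- `T(ρ) = Σ 2^{-(n+2)} (1 - ρ n)`. -/
noncomputable def Trho (ρ : ℕ → ℝ) : ℝ := ∑' n : ℕ, (1 - ρ n) / 2 ^ (n + 2)

/-- A `{-1,+1}`-valued sequence. -/
def IsSign (ρ : ℕ → ℝ) : Prop := ∀ n, ρ n = 1 ∨ ρ n = -1

/-- `ρ` is a Rademacher expansion of `t`. -/
def IsRademacherExp (ρ : ℕ → ℝ) (t : ℝ) : Prop := IsSign ρ ∧ Trho ρ = t

/-- The step condition for coefficients `c`. -/
def StepCond (c : ℕ → ℝ) (ρ : ℕ → ℝ) : Prop :=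
  ∀ n : ℕ, 1 ≤ n → ρ n * ∑ m ∈ Finset.range n, 2 ^ m * c m * ρ m ≤ 0

noncomputable def sharpAux (c : ℕ → ℝ) : ℕ → ℝ × ℝ
  | 0 => (1, c 0)
  | n + 1 =>
    let S := (sharpAux c n).2
    let r : ℝ := if S ≤ 0 then 1 else -1
    (r, S + 2 ^ (n + 1) * c (n + 1) * r)

/-- The sequence `ρ♯` for coefficients `c`. -/
noncomputable def rhoSharp (c : ℕ → ℝ) (n : ℕ) : ℝ := (sharpAux c n).1

noncomputable def flatAux (c : ℕ → ℝ) : ℕ → ℝ × ℝ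
  | 0 => (1, c 0)
  | n + 1 =>
    let S := (flatAux c n).2
    let r : ℝ := if S < 0 then 1 else -1
    (r, S + 2 ^ (n + 1) * c (n + 1) * r)

/-- The sequence `ρ♭` for coefficients `c`. -/
noncomputable def rhoFlat (c : ℕ → ℝ) (n : ℕ) : ℝ := (flatAux c n).1

/-- The Takagi–Landsberg function with parameter `α`. -/
noncomputable def fTL (α : ℝ) (t : ℝ) : ℝ := ∑' m : ℕ, α ^ m / 2 ^ m * phi (2 ^ m * t)

noncomputable def sharpAuxTL (α : ℝ) : ℕ → ℝ × ℝ
  | 0 => (1, 1)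
  | n + 1 =>
    let S := (sharpAuxTL α n).2
    let r : ℝ := if S ≤ 0 then 1 else -1
    (r, S + α ^ (n + 1) * r)

/-- The sequence `ρ♯(α)` for the Takagi–Landsberg function. -/
noncomputable def rhoSharpTL (α : ℝ) (n : ℕ) : ℝ := (sharpAuxTL α n).1

noncomputable def flatAuxTL (α : ℝ) : ℕ → ℝ × ℝ
  | 0 => (1, 1)
  | n + 1 =>
    let S := (flatAuxTL α n).2
    let r : ℝ := if S < 0 then 1 else -1
    (r, S + α ^ (n + 1) * r)

/-- The sequence `ρ♭(α)` for the Takagi–Landsberg function. -/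
noncomputable def rhoFlatTL (α : ℝ) (n : ℕ) : ℝ := (flatAuxTL α n).1

/-- `τ♯(α) = T(ρ♯(α))`. -/
noncomputable def tauSharp (α : ℝ) : ℝ := Trho (rhoSharpTL α)

/-- `τ♭(α) = T(ρ♭(α))`. -/
noncomputable def tauFlat (α : ℝ) : ℝ := Trho (rhoFlatTL α)

/-- The Littlewood polynomial `p_{2n}(x) = 1 - x - x² - ⋯ - x^{2n}`. -/
noncomputable def p2n (n : ℕ) (x : ℝ) : ℝ := 1 - ∑ m ∈ Finset.Icc 1 (2 * n), x ^ m
lemma phi_bdd (t : ℝ) : BddBelow (Set.range fun z : ℤ => |t - (z:ℝ)|) :=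
  ⟨0, by rintro x ⟨z, rfl⟩; exact abs_nonneg _⟩

lemma phi_eq (t : ℝ) : phi t = |t - (round t : ℝ)| := by
  apply le_antisymm
  · exact ciInf_le (phi_bdd t) (round t)
  · apply le_ciInf
    intro z
    by_cases h : z = round t
    · simp [h]
    · have h1 : |t - (round t : ℝ)| ≤ 1/2 := abs_sub_round t
      have h2 : (1:ℝ) ≤ |((round t - z : ℤ) : ℝ)| := by
        exact_mod_cast Int.one_le_abs (sub_ne_zero.2 (Ne.symm h))
      have h3 : |((round t : ℝ)) - z| ≤ |(round t : ℝ) - t| + |t - z| := abs_sub_le _ _ _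
      have h4 : |((round t - z : ℤ) : ℝ)| = |((round t : ℝ)) - z| := by push_cast; ring_nf
      have h1' : |(round t : ℝ) - t| ≤ 1/2 := by rw [abs_sub_comm]; exact h1
      linarith [h4 ▸ h2]

lemma phi_nonneg (t : ℝ) : 0 ≤ phi t := Real.iInf_nonneg fun z => abs_nonneg _

lemma phi_le_half (t : ℝ) : phi t ≤ 1/2 := by
  rw [phi_eq]; exact abs_sub_round t

lemma phi_int (z : ℤ) : phi (z : ℝ) = 0 := by
  rw [phi_eq]; simp

lemma phi_two_mul_le (t : ℝ) : phi (2*t) ≤ 2 * phi t := by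
  have harg : 2*t - ((2 * round t : ℤ):ℝ) = 2*(t - (round t:ℝ)) := by push_cast; ring
  calc phi (2*t) ≤ |2*t - ((2 * round t : ℤ):ℝ)| := ciInf_le (phi_bdd _) _
    _ = 2 * |t - (round t:ℝ)| := by rw [harg, abs_mul, abs_two]
    _ = 2 * phi t := by rw [phi_eq]

lemma phi_quarter : phi (1/4 : ℝ) = 1/4 := by
  rw [phi_eq]
  have : round (1/4 : ℝ) = 0 := by
    rw [round_eq]
    norm_num
  rw [this]
  norm_num

lemma phi_half : phi (1/2 : ℝ) = 1/2 := by
  rw [phi_eq]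
  have : round (1/2 : ℝ) = 1 := by
    rw [round_eq]; norm_num
  rw [this]; norm_num

lemma summable_g (α t : ℝ) (h : |α| < 2) :
    Summable (fun m : ℕ => α^m/2^m * phi (2^m * t)) := by
  apply Summable.of_norm_bounded (g := fun m => (|α|/2)^m * (1/2))
  · exact (summable_geometric_of_lt_one (by positivity) (by linarith)).mul_right _
  · intro m
    have h1 : ‖α^m/2^m * phi (2^m*t)‖ = (|α|/2)^m * |phi (2^m*t)| := by
      rw [Real.norm_eq_abs, abs_mul, abs_div, abs_pow, abs_pow, abs_two, div_pow]
    rw [h1]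
    have h2 : |phi (2^m*t)| ≤ 1/2 := by
      rw [abs_of_nonneg (phi_nonneg _)]; exact phi_le_half _
    exact mul_le_mul_of_nonneg_left h2 (by positivity)

lemma pair_nonneg (α s : ℝ) (hα : -1 ≤ α) : 0 ≤ phi s + α/2 * phi (2*s) := by
  rcases le_or_gt 0 α with h | h
  · have := phi_nonneg s
    have := phi_nonneg (2*s)
    positivity
  · nlinarith [phi_two_mul_le s, phi_nonneg s, phi_nonneg (2*s)]

lemma fTL_nonneg (α t : ℝ) (h1 : -1 ≤ α) (h2 : α < 2) : 0 ≤ fTL α t := by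
  set g : ℕ → ℝ := fun m => α^m/2^m * phi (2^m * t) with hg
  have habs : |α| < 2 := abs_lt.2 ⟨by linarith, h2⟩
  have hs : Summable g := summable_g α t habs
  have he : Summable fun k => g (2*k) :=
    hs.comp_injective (fun a b hab => by omega)
  have ho : Summable fun k => g (2*k+1) :=
    hs.comp_injective (fun a b hab => by omega)
  have key : ∀ k, 0 ≤ g (2*k) + g (2*k+1) := by
    intro k
    have harg : (2:ℝ)^(2*k+1) * t = 2 * ((2:ℝ)^(2*k) * t) := by ring
    have hpow : (0:ℝ) ≤ α^(2*k)/2^(2*k) := by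
      rw [pow_mul]; positivity
    have hcoef : α^(2*k+1)/(2:ℝ)^(2*k+1) = (α^(2*k)/2^(2*k)) * (α/2) := by
      rw [pow_succ, pow_succ]; ring
    simp only [hg, harg, hcoef]
    nlinarith [mul_nonneg hpow (pair_nonneg α ((2:ℝ)^(2*k)*t) h1)]
  calc (0:ℝ) ≤ ∑' k, (g (2*k) + g (2*k+1)) := tsum_nonneg key
    _ = (∑' k, g (2*k)) + ∑' k, g (2*k+1) := he.tsum_add ho
    _ = ∑' m, g m := tsum_even_add_odd he ho
    _ = fTL α t := rfl

lemma fTL_quarter (α : ℝ) : fTL α (1/4) = (1+α)/4 := by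
  unfold fTL
  rw [tsum_eq_sum (s := Finset.range 2) ?_]
  · rw [Finset.sum_range_succ, Finset.sum_range_one]
    norm_num
    rw [phi_quarter, phi_half]
    ring
  · intro m hm
    have hm2 : 2 ≤ m := by simp at hm; omega
    obtain ⟨k, rfl⟩ : ∃ k, m = k + 2 := ⟨m - 2, by omega⟩
    have : (2:ℝ)^(k+2) * (1/4) = ((2^k : ℤ) : ℝ) := by
      push_cast; rw [pow_add]; ring
    rw [this, phi_int]
    ring

lemma fTL_half (α : ℝ) : fTL α (1/2) = 1/2 := by
  unfold fTL
  rw [tsum_eq_single 0 ?_]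
  · norm_num [phi_half]
  · intro m hm
    obtain ⟨k, rfl⟩ : ∃ k, m = k + 1 := ⟨m - 1, by omega⟩
    have : (2:ℝ)^(k+1) * (1/2) = ((2^k : ℤ) : ℝ) := by
      push_cast; rw [pow_add]; ring
    rw [this, phi_int]
    ring

theorem takagi_landsberg_nonneg_iff
    (α : ℝ) (hα : α ∈ Set.Ioo (-2 : ℝ) 2) :
    ((∀ t ∈ Set.Icc (0 : ℝ) 1, 0 ≤ fTL α t) ↔ -1 ≤ α)
    ∧ ¬∃ β ∈ Set.Ioo (-2 : ℝ) 2, ∀ t ∈ Set.Icc (0 : ℝ) 1, fTL β t ≤ 0 := by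
  obtain ⟨h1, h2⟩ := hα
  constructor
  · constructor
    · intro h
      have hq := h (1/4) ⟨by norm_num, by norm_num⟩
      rw [fTL_quarter α] at hq
      linarith
    · intro hge t _
      exact fTL_nonneg α t hge h2
  · rintro ⟨β, hβ, h⟩
    have hh := h (1/2) ⟨by norm_num, by norm_num⟩
    rw [fTL_half β] at hh
    linarith
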